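/- Soundness of the regular-expression encoding: let R be a regular expression over alphabet Σ and Π_R the temporal Datalog program constructed inductively from R (base cases: R=∅ gives the empty program; R=σ gives F(t) ∧ A_σ(t) → G(t+1); R=ε gives F(t) → G(t); union, concatenation and plus are handled by renaming subprograms apart and adding linking rules as in the construction). If w = σ₁…σₙ ∈ L(R), τ is a time point, and D is a dataset containing F(τ) and A_{σᵢ}(τ+i−1) for each 1 ≤ i ≤ n, then Π_R ∪ D ⊨ G(τ+n). -/

import Mathlib

/-- A fact is either rigid (no time argument) or temporal (with a natural-number time). -/
inductive TFact (A : Type) where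
  | rigid (p : A)
  | temporal (p : A) (t : ℕ)

/-- The predicate of a fact. -/
def TFact.pred {A : Type} : TFact A → A
  | .rigid p => p
  | .temporal p _ => p

/-- A forward-propagating rule with a rigid head: all body atoms are rigid. -/
structure RigidRule (A : Type) where
  head : A
  body : List A

/-- A forward-propagating rule with temporal head `headPred` at time `t`:
temporal body atoms are at times `t - k` for offsets `k`, rigid body atoms as given.
Rules mention no concrete time points: they are instantiated at every admissible `t`. -/
structure FPRule (A : Type) where
  headPred : A
  tempBody : List (A × ℕ)
  rigidBody : List A

/-- Entailment (existence of a hyper-resolution derivation) from a program of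
forward-propagating rules `(Pr, Pt)` together with a set of facts `F`. -/
inductive Entails {A : Type} (Pr : Set (RigidRule A)) (Pt : Set (FPRule A))
    (F : Set (TFact A)) : TFact A → Prop where
  | fact {α : TFact A} : α ∈ F → Entails Pr Pt F α
  | rigid {r : RigidRule A} : r ∈ Pr →
      (∀ b ∈ r.body, Entails Pr Pt F (.rigid b)) →
      Entails Pr Pt F (.rigid r.head)
  | temp {r : FPRule A} (t : ℕ) : r ∈ Pt →
      (∀ p ∈ r.tempBody, p.2 ≤ t) →
      (∀ p ∈ r.tempBody, Entails Pr Pt F (.temporal p.1 (t - p.2))) →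
      (∀ b ∈ r.rigidBody, Entails Pr Pt F (.rigid b)) →
      Entails Pr Pt F (.temporal r.headPred t)

/-- Regular expressions over alphabet `σ`, with `plus` (one or more repetitions). -/
inductive RE (σ : Type) where
  | empty
  | eps
  | char (a : σ)
  | union (S T : RE σ)
  | concat (S T : RE σ)
  | plus (S : RE σ)

/-- The language of a regular expression. -/
inductive Lang {σ : Type} : RE σ → List σ → Prop where
  | eps : Lang .eps []
  | char (a : σ) : Lang (.char a) [a]
  | unionL {S T : RE σ} {w : List σ} : Lang S w → Lang (.union S T) w
  | unionR {S T : RE σ} {w : List σ} : Lang T w → Lang (.union S T) w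
  | concat {S T : RE σ} {u v : List σ} :
      Lang S u → Lang T v → Lang (.concat S T) (u ++ v)
  | plusOne {S : RE σ} {w : List σ} : Lang S w → Lang (.plus S) w
  | plusMore {S : RE σ} {u v : List σ} :
      Lang S u → Lang (.plus S) v → Lang (.plus S) (u ++ v)

/-- Predicates of the program `Π_R`: copies of `F` and `G` indexed by a path
(the path records the renaming-apart of subprograms), and the EDB predicates
`A_σ`, which are never renamed. -/
inductive RPred (σ : Type) where
  | F (path : List Bool)
  | G (path : List Bool)
  | A (a : σ)

/-- Renaming of predicates: every predicate other than the `A_σ` is renamed to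
a fresh copy (tagged by `b`). -/
def ren {σ : Type} (b : Bool) : RPred σ → RPred σ
  | .F p => .F (b :: p)
  | .G p => .G (b :: p)
  | .A a => .A a

/-- Apply a predicate renaming to a rule. -/
def mapRule {A B : Type} (f : A → B) (r : FPRule A) : FPRule B :=
  ⟨f r.headPred, r.tempBody.map (fun p => (f p.1, p.2)), r.rigidBody.map f⟩

/-- A linking rule `b(t) → h(t)`. -/
def link {σ : Type} (h b : RPred σ) : FPRule (RPred σ) := ⟨h, [(b, 0)], []⟩

/-- The inductive construction of the program `Π_R` from a regular expression:
`∅` gives the empty program; `σ` gives `F(t) ∧ A_σ(t) → G(t+1)`; `ε` gives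
`F(t) → G(t)`; union, concatenation and plus rename the subprograms apart and
add the linking rules. -/
def prog {σ : Type} : RE σ → Set (FPRule (RPred σ))
  | .empty => ∅
  | .char a => {⟨.G [], [(.F [], 1), (.A a, 1)], []⟩}
  | .eps => {link (.G []) (.F [])}
  | .union S T =>
      (mapRule (ren false) '' prog S) ∪ (mapRule (ren true) '' prog T) ∪
      {link (.F [false]) (.F []), link (.F [true]) (.F []),
       link (.G []) (.G [false]), link (.G []) (.G [true])}
  | .concat S T =>
      (mapRule (ren false) '' prog S) ∪ (mapRule (ren true) '' prog T) ∪
      {link (.F [false]) (.F []), link (.F [true]) (.G [false]),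
       link (.G []) (.G [true])}
  | .plus S =>
      (mapRule (ren false) '' prog S) ∪
      {link (.F [false]) (.F []), link (.F [false]) (.G [false]),
       link (.G []) (.G [false])}

/-- Renaming along a whole path. -/
def extendP {σ : Type} (L : List Bool) : RPred σ → RPred σ
  | .F p => .F (L ++ p)
  | .G p => .G (L ++ p)
  | .A a => .A a

lemma extendP_ren {σ : Type} (L : List Bool) (b : Bool) (p : RPred σ) :
    extendP L (ren b p) = extendP (L ++ [b]) p := by
  cases p <;> simp [extendP, ren]

lemma mapRule_mapRule {A B C : Type} (f : B → C) (g : A → B) (r : FPRule A) :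
    mapRule f (mapRule g r) = mapRule (fun x => f (g x)) r := by
  simp [mapRule, List.map_map, Function.comp]

lemma image_comp_ren {σ : Type} (L : List Bool) (b : Bool)
    (Q : Set (FPRule (RPred σ))) :
    mapRule (extendP (L ++ [b])) '' Q = mapRule (extendP L) '' (mapRule (ren b) '' Q) := by
  rw [Set.image_image]
  apply congrArg (· '' Q)
  funext r
  rw [mapRule_mapRule]
  congr 1
  funext p
  exact (extendP_ren L b p).symm

lemma mapRule_link {σ : Type} (f : RPred σ → RPred σ) (h b : RPred σ) :
    mapRule f (link h b) = link (f h) (f b) := by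
  simp [mapRule, link]

lemma entails_link {A : Type} {Pr : Set (RigidRule A)} {Pt : Set (FPRule A)}
    {F : Set (TFact A)} {h b : A} (hr : (⟨h, [(b, 0)], []⟩ : FPRule A) ∈ Pt)
    {t : ℕ} (hb : Entails Pr Pt F (.temporal b t)) :
    Entails Pr Pt F (.temporal h t) := by
  have := Entails.temp (r := ⟨h, [(b, 0)], []⟩) t hr
    (by intro p hp; simp at hp; subst hp; simp)
    (by intro p hp; simp at hp; subst hp; simpa using hb)
    (by intro x hx; simp at hx)
  exact this

lemma sound_aux {σ : Type} (R : RE σ) : ∀ (w : List σ), Lang R w →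
    ∀ (L : List Bool) (P : Set (FPRule (RPred σ))) (D : Set (TFact (RPred σ))) (τ : ℕ),
    mapRule (extendP L) '' prog R ⊆ P →
    Entails (∅ : Set (RigidRule (RPred σ))) P D (.temporal (.F L) τ) →
    (∀ i : Fin w.length, TFact.temporal (RPred.A (w.get i)) (τ + i) ∈ D) →
    Entails (∅ : Set (RigidRule (RPred σ))) P D (.temporal (.G L) (τ + w.length)) := by
  induction R with
  | empty =>
    intro w hw; cases hw
  | eps =>
    intro w hw L P D τ hsub hF hA
    cases hw
    have hmem : (link (.G L) (.F L) : FPRule (RPred σ)) ∈ P := by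
      apply hsub
      refine ⟨link (.G []) (.F []), rfl, ?_⟩
      simp [mapRule_link, extendP]
    simpa using entails_link hmem hF
  | char a =>
    intro w hw L P D τ hsub hF hA
    cases hw
    have hmem : (⟨.G L, [(.F L, 1), (.A a, 1)], []⟩ : FPRule (RPred σ)) ∈ P := by
      apply hsub
      refine ⟨⟨.G [], [(.F [], 1), (.A a, 1)], []⟩, rfl, ?_⟩
      simp [mapRule, extendP]
    have hAfact : Entails (∅ : Set (RigidRule (RPred σ))) P D (.temporal (.A a) τ) := by
      have := hA ⟨0, by simp⟩
      simpa using Entails.fact this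
    have := Entails.temp (r := (⟨.G L, [(.F L, 1), (.A a, 1)], []⟩ : FPRule (RPred σ))) (τ + 1) hmem
      (by intro p hp; simp at hp; rcases hp with rfl | rfl <;> simp)
      (by
        intro p hp
        simp at hp
        rcases hp with rfl | rfl <;> simpa using by
          first
          | exact hF
          | exact hAfact)
      (by intro x hx; simp at hx)
    simpa using this
  | union S T ihS ihT =>
    intro w hw L P D τ hsub hF hA
    have hsubS : mapRule (extendP (L ++ [false])) '' prog S ⊆ P := by
      rw [image_comp_ren]
      exact fun r hr => hsub (Set.image_mono (by intro x hx; exact Or.inl (Or.inl hx)) hr)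
    have hsubT : mapRule (extendP (L ++ [true])) '' prog T ⊆ P := by
      rw [image_comp_ren]
      exact fun r hr => hsub (Set.image_mono (by intro x hx; exact Or.inl (Or.inr hx)) hr)
    have hlink : ∀ h b : RPred σ, link h b ∈ prog (.union S T) →
        (link (extendP L h) (extendP L b) : FPRule (RPred σ)) ∈ P := by
      intro h b hmem
      apply hsub
      exact ⟨link h b, hmem, mapRule_link _ _ _⟩
    cases hw with
    | unionL hS =>
      have hF' : Entails (∅ : Set (RigidRule (RPred σ))) P D
          (.temporal (.F (L ++ [false])) τ) := by
        have := hlink (.F [false]) (.F []) (by simp [prog])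
        simp only [extendP, List.append_nil] at this
        exact entails_link this hF
      have hG' := ihS w hS (L ++ [false]) P D τ hsubS hF' hA
      have := hlink (.G []) (.G [false]) (by simp [prog])
      simp only [extendP, List.append_nil] at this
      exact entails_link this hG'
    | unionR hT =>
      have hF' : Entails (∅ : Set (RigidRule (RPred σ))) P D
          (.temporal (.F (L ++ [true])) τ) := by
        have := hlink (.F [true]) (.F []) (by simp [prog])
        simp only [extendP, List.append_nil] at this
        exact entails_link this hF
      have hG' := ihT w hT (L ++ [true]) P D τ hsubT hF' hA
      have := hlink (.G []) (.G [true]) (by simp [prog])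
      simp only [extendP, List.append_nil] at this
      exact entails_link this hG'
  | concat S T ihS ihT =>
    intro w hw L P D τ hsub hF hA
    have hsubS : mapRule (extendP (L ++ [false])) '' prog S ⊆ P := by
      rw [image_comp_ren]
      exact fun r hr => hsub (Set.image_mono (by intro x hx; exact Or.inl (Or.inl hx)) hr)
    have hsubT : mapRule (extendP (L ++ [true])) '' prog T ⊆ P := by
      rw [image_comp_ren]
      exact fun r hr => hsub (Set.image_mono (by intro x hx; exact Or.inl (Or.inr hx)) hr)
    have hlink : ∀ h b : RPred σ, link h b ∈ prog (.concat S T) →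
        (link (extendP L h) (extendP L b) : FPRule (RPred σ)) ∈ P := by
      intro h b hmem
      apply hsub
      exact ⟨link h b, hmem, mapRule_link _ _ _⟩
    cases hw with
    | concat hS hT =>
      rename_i u v
      have hAu : ∀ i : Fin u.length, TFact.temporal (RPred.A (u.get i)) (τ + i) ∈ D := by
        intro i
        have := hA ⟨i, by simp only [List.length_append]; omega⟩
        simpa [List.get_eq_getElem, List.getElem_append_left i.isLt] using this
      have hAv : ∀ i : Fin v.length,
          TFact.temporal (RPred.A (v.get i)) (τ + u.length + i) ∈ D := by
        intro i
        have := hA ⟨u.length + i, by simp only [List.length_append]; omega⟩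
        simp only [List.get_eq_getElem] at this ⊢
        rw [List.getElem_append_right (by omega)] at this
        simpa [Nat.add_assoc] using this
      have hF' : Entails (∅ : Set (RigidRule (RPred σ))) P D
          (.temporal (.F (L ++ [false])) τ) := by
        have := hlink (.F [false]) (.F []) (by simp [prog])
        simp only [extendP, List.append_nil] at this
        exact entails_link this hF
      have hGS := ihS u hS (L ++ [false]) P D τ hsubS hF' hAu
      have hFT : Entails (∅ : Set (RigidRule (RPred σ))) P D
          (.temporal (.F (L ++ [true])) (τ + u.length)) := by
        have := hlink (.F [true]) (.G [false]) (by simp [prog])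
        simp only [extendP] at this
        exact entails_link this hGS
      have hGT := ihT v hT (L ++ [true]) P D (τ + u.length) hsubT hFT hAv
      have := hlink (.G []) (.G [true]) (by simp [prog])
      simp only [extendP, List.append_nil] at this
      have := entails_link this hGT
      simpa [Nat.add_assoc] using this
  | plus S ihS =>
    intro w hw L P D τ hsub hF hA
    have hsubS : mapRule (extendP (L ++ [false])) '' prog S ⊆ P := by
      rw [image_comp_ren]
      exact fun r hr => hsub (Set.image_mono (by intro x hx; exact Or.inl hx) hr)
    have hlink : ∀ h b : RPred σ, link h b ∈ prog (.plus S) →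
        (link (extendP L h) (extendP L b) : FPRule (RPred σ)) ∈ P := by
      intro h b hmem
      apply hsub
      exact ⟨link h b, hmem, mapRule_link _ _ _⟩
    have hFGlink : (link (.F (L ++ [false])) (.G (L ++ [false])) : FPRule (RPred σ)) ∈ P := by
      have := hlink (.F [false]) (.G [false]) (by simp [prog])
      simpa [extendP] using this
    have inner : ∀ (R' : RE σ) (w' : List σ), Lang R' w' → R' = .plus S →
        ∀ τ' : ℕ,
        Entails (∅ : Set (RigidRule (RPred σ))) P D (.temporal (.F (L ++ [false])) τ') →
        (∀ i : Fin w'.length, TFact.temporal (RPred.A (w'.get i)) (τ' + i) ∈ D) →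
        Entails (∅ : Set (RigidRule (RPred σ))) P D
          (.temporal (.G (L ++ [false])) (τ' + w'.length)) := by
      intro R' w' h
      induction h with
      | eps => intro hEq; simp at hEq
      | char a => intro hEq; simp at hEq
      | unionL _ => intro hEq; simp at hEq
      | unionR _ => intro hEq; simp at hEq
      | concat _ _ => intro hEq; simp at hEq
      | plusOne hS =>
        intro hEq τ' hF' hA'
        obtain rfl : _ = S := by injection hEq
        exact ihS _ hS (L ++ [false]) P D τ' hsubS hF' hA'
      | plusMore hS hplus ih1 ih2 =>
        rename_i S' u v
        intro hEq τ' hF' hA'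
        obtain rfl : S' = S := by injection hEq
        have hAu : ∀ i : Fin u.length, TFact.temporal (RPred.A (u.get i)) (τ' + i) ∈ D := by
          intro i
          have := hA' ⟨i, by simp only [List.length_append]; omega⟩
          simpa [List.get_eq_getElem, List.getElem_append_left i.isLt] using this
        have hAv : ∀ i : Fin v.length,
            TFact.temporal (RPred.A (v.get i)) (τ' + u.length + i) ∈ D := by
          intro i
          have := hA' ⟨u.length + i, by simp only [List.length_append]; omega⟩
          simp only [List.get_eq_getElem] at this ⊢
          rw [List.getElem_append_right (by omega)] at this
          simpa [Nat.add_assoc] using this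
        have hGu := ihS _ hS (L ++ [false]) P D τ' hsubS hF' hAu
        have hFv := entails_link hFGlink hGu
        have hGv := ih2 rfl (τ' + u.length) hFv hAv
        simpa [Nat.add_assoc] using hGv
    have hF' : Entails (∅ : Set (RigidRule (RPred σ))) P D
        (.temporal (.F (L ++ [false])) τ) := by
      have := hlink (.F [false]) (.F []) (by simp [prog])
      simp only [extendP, List.append_nil] at this
      exact entails_link this hF
    have hG' := inner _ w hw rfl τ hF' hA
    have := hlink (.G []) (.G [false]) (by simp [prog])
    simp only [extendP, List.append_nil] at this
    exact entails_link this hG'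

/-- Soundness of the regular-expression encoding: if `w = σ₁…σₙ ∈ L(R)` and the
dataset `D` contains `F(τ)` and `A_{σᵢ}(τ+i−1)` for `1 ≤ i ≤ n`, then
`Π_R ∪ D ⊨ G(τ+n)`. -/
theorem regex_encoding_sound {σ : Type} (R : RE σ) (w : List σ) (hw : Lang R w)
    (τ : ℕ) (D : Set (TFact (RPred σ)))
    (hF : TFact.temporal (RPred.F []) τ ∈ D)
    (hA : ∀ i : Fin w.length, TFact.temporal (RPred.A (w.get i)) (τ + i) ∈ D) :
    Entails (∅ : Set (RigidRule (RPred σ))) (prog R) D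
      (.temporal (RPred.G []) (τ + w.length)) := by
  apply sound_aux R w hw [] (prog R) D τ
  · intro r hr
    obtain ⟨s, hs, rfl⟩ := hr
    have : mapRule (extendP []) s = s := by
      have hid : (extendP [] : RPred σ → RPred σ) = id := by
        funext p; cases p <;> simp [extendP]
      simp [hid, mapRule]
    rwa [this]
  · exact Entails.fact hF
  · exact hA
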